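/- Define N₇(η) := cosh(η)/sinh⁵(η) − (4/3)·cosh(η)/sinh³(η) − (8/3)·(1 − coth η) for η > 0. Then N₇(η) > 0 for all sufficiently large η and lim_{η→∞} (1/η) · log N₇(η) = −6. -/

import Mathlib

open Real Filter

/-- Numerator of the hitting probability of the 7-dimensional hyperbolic Brownian motion:
`N₇(η) = cosh η / sinh⁵ η - (4/3) cosh η / sinh³ η - (8/3)(1 - coth η)`. -/
noncomputable def N₇ (η : ℝ) : ℝ :=
  Real.cosh η / Real.sinh η ^ 5 - (4 / 3) * (Real.cosh η / Real.sinh η ^ 3) -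
    (8 / 3) * (1 - Real.cosh η / Real.sinh η)

noncomputable def g₇ (η : ℝ) : ℝ :=
  16 * (10 - 5 * Real.exp (-η) ^ 2 + Real.exp (-η) ^ 4) / (3 * (1 - Real.exp (-η) ^ 2) ^ 5)

lemma N₇_eq (η : ℝ) (hη : 0 < η) : N₇ η = g₇ η * Real.exp (-η) ^ 6 := by
  have hx0 : 0 < Real.exp (-η) := Real.exp_pos _
  have hx1 : Real.exp (-η) < 1 := by
    rw [Real.exp_lt_one_iff]; linarith
  set x := Real.exp (-η) with hxdef
  have hexp : Real.exp η = x⁻¹ := by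
    rw [hxdef, Real.exp_neg, inv_inv]
  have hxne : x ≠ 0 := ne_of_gt hx0
  have h1 : (1 : ℝ) - x ^ 2 ≠ 0 := by nlinarith
  have hs : Real.sinh η = (1 - x ^ 2) / (2 * x) := by
    rw [Real.sinh_eq, hexp, hxdef]
    field_simp
  have hc : Real.cosh η = (1 + x ^ 2) / (2 * x) := by
    rw [Real.cosh_eq, hexp, hxdef]
    field_simp
  unfold N₇ g₇
  rw [hs, hc, ← hxdef]
  field_simp
  ring

lemma g₇_pos (η : ℝ) (hη : 0 < η) : 0 < g₇ η := by
  have hx0 : 0 < Real.exp (-η) := Real.exp_pos _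
  have hx1 : Real.exp (-η) < 1 := by rw [Real.exp_lt_one_iff]; linarith
  set x := Real.exp (-η)
  have h1 : (0 : ℝ) < 1 - x ^ 2 := by nlinarith
  unfold g₇
  apply div_pos
  · nlinarith
  · positivity

lemma g₇_tendsto : Filter.Tendsto g₇ Filter.atTop (nhds (160 / 3)) := by
  have hF : ContinuousAt (fun y : ℝ =>
      16 * (10 - 5 * y ^ 2 + y ^ 4) / (3 * (1 - y ^ 2) ^ 5)) 0 := by
    apply ContinuousAt.div
    · fun_prop
    · fun_prop
    · norm_num
  have hx : Filter.Tendsto (fun η : ℝ => Real.exp (-η)) Filter.atTop (nhds 0) :=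
    Real.tendsto_exp_neg_atTop_nhds_zero
  have := hF.tendsto.comp hx
  simp only [Function.comp_def] at this
  convert this using 2
  all_goals norm_num [g₇]

/-- `N₇` is eventually positive and `lim_{η→∞} (1/η) log N₇(η) = -6`, i.e. the hitting
probability of a hyperbolic ball for the 7-dimensional hyperbolic Brownian motion decays
with exponential rate `n - 1 = 6`. -/
theorem hitting_decay_dim7 :
    (∀ᶠ η : ℝ in Filter.atTop, 0 < N₇ η) ∧
    Filter.Tendsto (fun η : ℝ => (1 / η) * Real.log (N₇ η)) Filter.atTop (nhds (-6)) := by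
  constructor
  · filter_upwards [eventually_gt_atTop 0] with η hη
    rw [N₇_eq η hη]
    exact mul_pos (g₇_pos η hη) (by positivity)
  · have hlog : Filter.Tendsto (fun η : ℝ => Real.log (g₇ η)) Filter.atTop
        (nhds (Real.log (160 / 3))) :=
      (Real.continuousAt_log (by norm_num)).tendsto.comp g₇_tendsto
    have hinv : Filter.Tendsto (fun η : ℝ => 1 / η) Filter.atTop (nhds 0) := by
      simpa using tendsto_inv_atTop_zero
    have hmain : Filter.Tendsto
        (fun η : ℝ => (1 / η) * Real.log (g₇ η) - 6) Filter.atTop (nhds (-6)) := by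
      have := (hinv.mul hlog).sub_const 6
      simpa using this
    refine hmain.congr' ?_
    filter_upwards [eventually_gt_atTop 0] with η hη
    rw [N₇_eq η hη, Real.log_mul (ne_of_gt (g₇_pos η hη)) (by positivity),
      Real.log_pow, Real.log_exp]
    have hηne : η ≠ 0 := ne_of_gt hη
    field_simp
    ring
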